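/- Let G be a group, H a subgroup of G of finite index, and N(H) = ⋂_{g ∈ G} g⁻¹Hg the normal core of H in G. Then G is not icc if and only if either (i) H is not icc, or (iii) there exists g ∈ G \ H with g ≠ 1 of finite order and some h ∈ N(H) such that g⁻¹kg = h⁻¹kh for all k ∈ N(H). -/

import Mathlib

open Pointwise

/-- A group is *icc* (with infinite conjugacy classes) if it is nontrivial and the
conjugacy class of every nontrivial element is infinite. -/
def IsICC (G : Type*) [Group G] : Prop :=
  Nontrivial G ∧ ∀ g : G, g ≠ 1 → {h : G | ∃ x : G, x⁻¹ * g * x = h}.Infinite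

section aux

variable {G : Type*} [Group G]

def classSet (a : G) : Set G := {h : G | ∃ x : G, x⁻¹ * a * x = h}

lemma classSet_mul (a b : G) : classSet (a * b) ⊆ classSet a * classSet b := by
  rintro _ ⟨x, rfl⟩
  exact ⟨x⁻¹ * a * x, ⟨x, rfl⟩, x⁻¹ * b * x, ⟨x, rfl⟩, by group⟩

lemma classSet_inv (a : G) : classSet a⁻¹ ⊆ (classSet a)⁻¹ := by
  rintro _ ⟨x, rfl⟩
  exact Set.mem_inv.2 ⟨x, by group⟩

lemma classSet_conj (a k : G) : classSet (k⁻¹ * a * k) ⊆ classSet a := by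
  rintro _ ⟨x, rfl⟩
  exact ⟨k * x, by group⟩

lemma classSet_pow (a : G) (n : ℕ) : classSet (a ^ n) ⊆ (· ^ n) '' classSet a := by
  rintro _ ⟨x, rfl⟩
  refine ⟨x⁻¹ * a * x, ⟨x, rfl⟩, ?_⟩
  show (x⁻¹ * a * x) ^ n = x⁻¹ * a ^ n * x
  rw [show x⁻¹ * a * x = x⁻¹ * a * x⁻¹⁻¹ by rw [inv_inv], conj_pow, inv_inv]

/-- Covering lemma: the class of `a` is covered by conjugates of the `K`-class of `a`. -/
lemma classSet_subset_iUnion (K : Subgroup G) (a : G) :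
    classSet a ⊆ ⋃ q : G ⧸ K,
      (fun k => Quotient.out q * k * (Quotient.out q)⁻¹) ''
        {h : G | ∃ x ∈ K, x⁻¹ * a * x = h} := by
  rintro _ ⟨x, rfl⟩
  set q : G ⧸ K := ((x⁻¹ : G) : G ⧸ K) with hq
  have hy : (Quotient.out q)⁻¹ * x⁻¹ ∈ K := by
    rw [← QuotientGroup.eq]
    simp [hq]
  refine Set.mem_iUnion.2 ⟨q, (Quotient.out q)⁻¹ * x⁻¹ * a * ((Quotient.out q)⁻¹ * x⁻¹)⁻¹,
    ⟨((Quotient.out q)⁻¹ * x⁻¹)⁻¹, inv_mem hy, by group⟩, by group⟩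

lemma classSet_finite_of_finite (K : Subgroup G) [K.FiniteIndex] (a : G)
    (h : {h : G | ∃ x ∈ K, x⁻¹ * a * x = h}.Finite) : (classSet a).Finite :=
  Set.Finite.subset (Set.finite_iUnion fun _ => h.image _) (classSet_subset_iUnion K a)

end aux

/-- G is not icc iff H is not icc or some torsion g ∉ H acts on the normal core of H
as conjugation by an element of the normal core. -/
theorem stmt_7 {G : Type*} [Group G] (H : Subgroup G) [H.FiniteIndex] :
    ¬ IsICC G ↔
      (¬ IsICC H ∨
        ∃ g : G, g ∉ H ∧ g ≠ 1 ∧ IsOfFinOrder g ∧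
          ∃ h ∈ H.normalCore, ∀ k ∈ H.normalCore, g⁻¹ * k * g = h⁻¹ * k * h) := by
  constructor
  · intro hG
    rw [IsICC, not_and_or] at hG
    rcases hG with hG | hG
    · -- G not nontrivial, hence H not nontrivial
      left
      rw [not_nontrivial_iff_subsingleton] at hG
      haveI : Subsingleton ↥H := ⟨fun a b => Subtype.ext (Subsingleton.elim _ _)⟩
      rintro ⟨hnt, -⟩
      exact not_nontrivial ↥H hnt
    · push_neg at hG
      obtain ⟨g, hg1, hgfin⟩ := hG
      have hgfin' : (classSet g).Finite := hgfin
      by_cases hB : ∃ h0 : G, h0 ∈ H ∧ h0 ≠ 1 ∧ (classSet h0).Finite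
      · -- some nontrivial element of H has finite class: H is not icc
        obtain ⟨h0, h0H, h0ne, h0fin⟩ := hB
        left
        rintro ⟨-, hicc⟩
        have hinj : Set.InjOn (Subtype.val : ↥H → G)
            {h : ↥H | ∃ x : ↥H, x⁻¹ * ⟨h0, h0H⟩ * x = h} := fun a _ b _ h => Subtype.ext h
        have hfinsub : {h : ↥H | ∃ x : ↥H, x⁻¹ * ⟨h0, h0H⟩ * x = h}.Finite := by
          refine Set.Finite.of_finite_image (h0fin.subset ?_) hinj
          rintro _ ⟨h1, ⟨x, rfl⟩, rfl⟩
          exact ⟨(x : G), rfl⟩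
        exact hicc ⟨h0, h0H⟩ (by simpa [Subtype.ext_iff] using h0ne) hfinsub
      · -- every nontrivial element of H has infinite class
        push_neg at hB
        right
        have hgH : g ∉ H := fun hmem => hB g hmem hg1 hgfin'
        have hford : IsOfFinOrder g := by
          have key : ∀ a b : ℕ, a < b →
              ((g ^ a : G) : G ⧸ H) = ((g ^ b : G) : G ⧸ H) → IsOfFinOrder g := by
            intro a b hab he
            have hmem : g ^ (b - a) ∈ H := by
              have h1 : (g ^ a)⁻¹ * g ^ b ∈ H := QuotientGroup.eq.mp he
              have h2 : (g ^ a)⁻¹ * g ^ b = g ^ (b - a) := by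
                rw [show g ^ b = g ^ a * g ^ (b - a) by
                  rw [← pow_add, Nat.add_sub_cancel' hab.le]]
                group
              rwa [h2] at h1
            have hfin : (classSet (g ^ (b - a))).Finite :=
              (hgfin'.image _).subset (classSet_pow g _)
            by_cases hone : g ^ (b - a) = 1
            · exact isOfFinOrder_iff_pow_eq_one.mpr ⟨b - a, by omega, hone⟩
            · exact absurd hfin (hB _ hmem hone)
          obtain ⟨a, b, hne, he⟩ :=
            Finite.exists_ne_map_eq_of_infinite (fun n : ℕ => ((g ^ n : G) : G ⧸ H))
          exact hne.lt_or_gt.elim (fun h => key a b h he) (fun h => key b a h he.symm)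
        refine ⟨g, hgH, hg1, hford, 1, one_mem _, fun k hk => ?_⟩
        -- the commutator of g and k lies in H and has finite class, hence is trivial
        have hkinvN : k⁻¹ ∈ H.normalCore := inv_mem hk
        have hconjN : g⁻¹ * k⁻¹ * g ∈ H.normalCore := by
          have := (Subgroup.normalCore_normal H).conj_mem k⁻¹ hkinvN g⁻¹
          rwa [inv_inv] at this
        have hcH : g⁻¹ * (k⁻¹ * g * k) ∈ H := by
          have : (g⁻¹ * k⁻¹ * g) * k ∈ H.normalCore := mul_mem hconjN hk
          have h2 : (g⁻¹ * k⁻¹ * g) * k = g⁻¹ * (k⁻¹ * g * k) := by group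
          exact H.normalCore_le (h2 ▸ this)
        have hcfin : (classSet (g⁻¹ * (k⁻¹ * g * k))).Finite := by
          have finA : (classSet g⁻¹).Finite := hgfin'.inv.subset (classSet_inv g)
          have finB : (classSet (k⁻¹ * g * k)).Finite := hgfin'.subset (classSet_conj g k)
          exact ((finA.mul finB).subset (classSet_mul _ _))
        have hc1 : g⁻¹ * (k⁻¹ * g * k) = 1 := by
          by_contra hne
          exact hB _ hcH hne hcfin
        have h2 : g⁻¹⁻¹ = k⁻¹ * g * k := mul_eq_one_iff_inv_eq.mp hc1
        rw [inv_inv] at h2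
        simp only [inv_one, one_mul, mul_one]
        nth_rewrite 2 [h2]
        group
  · rintro (hH | ⟨g, hgH, hg1, _, h, hhN, hconj⟩)
    · rw [IsICC, not_and_or] at hH
      rcases hH with ha | hb
      · -- H trivial, hence G finite
        rw [not_nontrivial_iff_subsingleton] at ha
        have hbot : H = ⊥ := by
          rw [Subgroup.eq_bot_iff_forall]
          intro x hx
          simpa [Subtype.ext_iff] using Subsingleton.elim (⟨x, hx⟩ : ↥H) 1
        haveI : Finite G := by
          refine Nat.finite_of_card_ne_zero ?_
          have : (⊥ : Subgroup G).index ≠ 0 := hbot ▸ Subgroup.FiniteIndex.index_ne_zero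
          rwa [Subgroup.index_bot] at this
        rintro ⟨hnt, hicc⟩
        obtain ⟨x, hx⟩ := exists_ne (1 : G)
        exact hicc x hx (Set.toFinite _)
      · push_neg at hb
        obtain ⟨h0, h0ne, h0fin⟩ := hb
        have hGfin : (classSet (h0 : G)).Finite := by
          refine classSet_finite_of_finite H _ ?_
          refine (h0fin.image (Subtype.val : ↥H → G)).subset ?_
          rintro _ ⟨x, hx, rfl⟩
          exact ⟨((⟨x, hx⟩ : ↥H)⁻¹ * h0 * ⟨x, hx⟩ : ↥H), ⟨⟨x, hx⟩, rfl⟩, rfl⟩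
        rintro ⟨-, hicc⟩
        exact hicc (h0 : G) (fun he => h0ne (by exact_mod_cast he)) hGfin
    · -- g * h⁻¹ is a nontrivial element centralizing the normal core
      set c : G := g * h⁻¹ with hc
      have hc1 : c ≠ 1 := by
        intro he
        exact hgH (mul_inv_eq_one.mp he ▸ H.normalCore_le hhN)
      have hcent : ∀ k ∈ H.normalCore, k⁻¹ * c * k = c := by
        intro k hk
        have e := hconj k hk
        have e2 : k * g = g * (h⁻¹ * k * h) := by rw [← e]; group
        have e3 : k * (g * h⁻¹) = (g * h⁻¹) * k := by
          rw [show k * (g * h⁻¹) = (k * g) * h⁻¹ by group, e2]; group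
        rw [hc, show k⁻¹ * (g * h⁻¹) * k = k⁻¹ * (k * (g * h⁻¹)) by rw [e3]; group]
        group
      have hfin : (classSet c).Finite := by
        refine classSet_finite_of_finite H.normalCore c ?_
        refine (Set.finite_singleton c).subset ?_
        rintro _ ⟨y, hy, rfl⟩
        exact hcent y hy
      rintro ⟨-, hicc⟩
      exact hicc c hc1 hfin
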